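/- Let T and T' be finite decomposition trees with labelings ℓ and ℓ', and let G(T) and G(T') be their associated cographs (the graphs whose vertices are the leaves, with two distinct leaves adjacent iff their meet is labeled 1). Then there exists a graph embedding of G(T) into G(T') if and only if there exists an injective order-embedding f from T into T' (t ≤ s iff f(t) ≤ f(s)) such that ℓ'(f(t)) = ℓ(t) for every node t of T, and for all leaves v, w of T, ℓ'(f(v) ⊓ f(w)) = ℓ(v ⊓ w), where ⊓ denotes the meet in the respective tree. -/

import Mathlib

open SimpleGraph

/-- `ℓ : T → Fin 3` is a decomposition-tree labeling of the finite meet-semilattice `T`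
with least element (the root): the predecessors of every element are linearly ordered
(so `T` is a tree whose pairwise meets exist); a node is labeled `2` iff it is maximal
(a leaf); every non-leaf has at least two immediate successors (covers); and labels of
non-leaves alternate: a non-leaf cover of a node labeled `1` (resp. `0`) is labeled `0`
(resp. `1`). -/
def IsFiniteDecompTree {T : Type*} [SemilatticeInf T] [OrderBot T] (ℓ : T → Fin 3) :
    Prop :=
  (∀ t a b : T, a ≤ t → b ≤ t → a ≤ b ∨ b ≤ a) ∧
  (∀ t : T, ℓ t = 2 ↔ IsMax t) ∧
  (∀ t : T, ¬ IsMax t → ∃ a b : T, a ≠ b ∧ t ⋖ a ∧ t ⋖ b) ∧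
  (∀ t s : T, t ⋖ s → ¬ IsMax t → ¬ IsMax s →
    (ℓ t = 1 → ℓ s = 0) ∧ (ℓ t = 0 → ℓ s = 1))

/-- The cograph `G(T)` of a labeled decomposition tree: its vertices are the leaves
(maximal elements) of `T`, and two distinct leaves are adjacent iff their meet is
labeled `1`. -/
def cographOf {T : Type*} [SemilatticeInf T] (ℓ : T → Fin 3) :
    SimpleGraph {t : T // IsMax t} where
  Adj v w := v ≠ w ∧ ℓ ((v : T) ⊓ (w : T)) = 1
  symm := ⟨by
    rintro v w ⟨hne, hlab⟩
    exact ⟨hne.symm, by rwa [inf_comm]⟩⟩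
  loopless := ⟨fun v h => h.1 rfl⟩

section Aux
variable {T : Type*} [SemilatticeInf T]

lemma tree_meet_eq_of_not_le
    (hlin : ∀ t a b : T, a ≤ t → b ≤ t → a ≤ b ∨ b ≤ a)
    {r v w : T} (hrv : r ≤ v) (hrw : ¬ r ≤ w) : v ⊓ w = r ⊓ w := by
  apply le_antisymm
  · rcases hlin v (v ⊓ w) r inf_le_left hrv with h | h
    · exact le_inf h inf_le_right
    · exact absurd (h.trans inf_le_right) hrw
  · exact le_inf (inf_le_left.trans hrv) inf_le_right

lemma tree_cross_meet
    (hlin : ∀ t a b : T, a ≤ t → b ≤ t → a ≤ b ∨ b ≤ a)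
    {t c v w : T} (hc : t ⋖ c) (hcv : c ≤ v) (htw : t ≤ w) (hcw : ¬ c ≤ w) :
    v ⊓ w = t := by
  rw [tree_meet_eq_of_not_le hlin hcv hcw]
  have h1 : t ≤ c ⊓ w := le_inf hc.lt.le htw
  rcases eq_or_lt_of_le h1 with h | h
  · exact h.symm
  · exfalso
    rcases eq_or_lt_of_le (inf_le_left : c ⊓ w ≤ c) with h2 | h2
    · exact hcw (h2 ▸ inf_le_right)
    · exact hc.2 h h2

lemma tree_covers_eq
    (hlin : ∀ t a b : T, a ≤ t → b ≤ t → a ≤ b ∨ b ≤ a)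
    {t c1 c2 x : T} (h1 : t ⋖ c1) (h2 : t ⋖ c2) (hx1 : c1 ≤ x) (hx2 : c2 ≤ x) :
    c1 = c2 := by
  rcases hlin x c1 c2 hx1 hx2 with h | h
  · rcases eq_or_lt_of_le h with h' | h'
    · exact h'
    · exact (h2.2 h1.lt h').elim
  · rcases eq_or_lt_of_le h with h' | h'
    · exact h'.symm
    · exact (h1.2 h2.lt h').elim

lemma exists_covby_le_fin {T : Type*} [Fintype T] [PartialOrder T] {s t : T} (h : s < t) :
    ∃ r, s ⋖ r ∧ r ≤ t := by
  classical
  obtain ⟨r, hr, hmin⟩ := (Finset.exists_minimal (s :=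
    (Finset.univ.filter fun x => s < x ∧ x ≤ t)) ⟨t, by simp [h]⟩).imp
      fun _ h => And.intro h.1 fun x hx => h.not_lt (y := x) hx
  simp only [Finset.mem_filter, Finset.mem_univ, true_and] at hr
  refine ⟨r, ⟨hr.1, fun z hz hzr => hmin z ?_ hzr⟩, hr.2⟩
  simp only [Finset.mem_filter, Finset.mem_univ, true_and]
  exact ⟨hz, hzr.le.trans hr.2⟩

lemma fin3_eq_of_ne2 {x y : Fin 3} (hx : x ≠ 2) (hy : y ≠ 2) (h : x = 1 ↔ y = 1) : x = y := by
  omega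

end Aux

/-- Let `T`, `T'` be finite decomposition trees with labelings `ℓ`, `ℓ'`
and associated cographs `G(T)`, `G(T')`. Then `G(T)` embeds into `G(T')` (as an induced
subgraph) iff there is an injective order-embedding `f : T ↪o T'` (`t ≤ s ↔ f t ≤ f s`)
preserving labels (`ℓ' (f t) = ℓ t` for all `t`) and preserving the labels of meets of
leaves (`ℓ' (f v ⊓ f w) = ℓ (v ⊓ w)` for all leaves `v`, `w`). -/
theorem cograph_embedding_iff_labeled_tree_embedding
    {T T' : Type*} [Fintype T] [Fintype T']
    [SemilatticeInf T] [OrderBot T] [SemilatticeInf T'] [OrderBot T']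
    (ℓ : T → Fin 3) (ℓ' : T' → Fin 3)
    (hT : IsFiniteDecompTree ℓ) (hT' : IsFiniteDecompTree ℓ') :
    Nonempty (cographOf ℓ ↪g cographOf ℓ') ↔
      ∃ f : T ↪o T',
        (∀ t : T, ℓ' (f t) = ℓ t) ∧
        (∀ v w : T, IsMax v → IsMax w → ℓ' (f v ⊓ f w) = ℓ (v ⊓ w)) := by
  obtain ⟨hlin, hleaf2, hbranch, halt⟩ := hT
  obtain ⟨hlin', hleaf2', hbranch', halt'⟩ := hT'
  constructor
  · rintro ⟨g⟩
    classical
    -- meet-label preservation on distinct leaves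
    have key : ∀ v w : {t : T // IsMax t}, v ≠ w →
        ℓ' ((g v : T') ⊓ (g w : T')) = ℓ ((v : T) ⊓ (w : T)) := by
      intro v w hne
      have hvw : (v : T) ⊓ w < v := by
        refine lt_of_le_of_ne inf_le_left fun h => hne ?_
        have h1 : (v : T) ≤ w := h ▸ inf_le_right
        exact Subtype.ext (le_antisymm h1 (v.2 h1))
      have hgne : g v ≠ g w := fun h => hne (g.injective h)
      have hgvw : (g v : T') ⊓ (g w : T') < g v := by
        refine lt_of_le_of_ne inf_le_left fun h => hgne ?_
        have h1 : (g v : T') ≤ g w := h ▸ inf_le_right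
        exact Subtype.ext (le_antisymm h1 ((g v).2 h1))
      have h2 : ℓ ((v : T) ⊓ w) ≠ 2 := fun h => hvw.not_isMax ((hleaf2 _).1 h)
      have h2' : ℓ' ((g v : T') ⊓ g w) ≠ 2 := fun h => hgvw.not_isMax ((hleaf2' _).1 h)
      have hadj : (cographOf ℓ').Adj (g v) (g w) ↔ (cographOf ℓ).Adj v w := g.map_rel_iff
      have hadj' : (g v ≠ g w ∧ ℓ' ((g v : T') ⊓ g w) = 1) ↔
          (v ≠ w ∧ ℓ ((v : T) ⊓ w) = 1) := hadj
      refine fin3_eq_of_ne2 h2' h2 ?_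
      constructor
      · intro h; exact (hadj'.1 ⟨hgne, h⟩).2
      · intro h; exact (hadj'.2 ⟨hne, h⟩).2
    have hleaf : ∀ t : T, ∃ v : T, t ≤ v ∧ IsMax v := by
      intro t
      obtain ⟨b, hb, hmax⟩ := Finite.exists_le_maximal (p := fun _ => True) (a := t) trivial
      exact ⟨b, hb, fun c hc => hmax.2 trivial hc⟩
    let V : T → Finset {t : T // IsMax t} :=
      fun t => Finset.univ.filter fun v => t ≤ (v : T)
    have hmem : ∀ {t : T} {v : {t : T // IsMax t}}, v ∈ V t ↔ t ≤ (v : T) := by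
      intro t v
      simp [V]
    have hVne : ∀ t : T, (V t).Nonempty := by
      intro t
      obtain ⟨v, hv, hmax⟩ := hleaf t
      exact ⟨⟨v, hmax⟩, hmem.2 hv⟩
    let f : T → T' := fun t => (V t).inf' (hVne t) fun v => (g v : T')
    have hfle : ∀ (t : T) (v : {t : T // IsMax t}), t ≤ (v : T) → f t ≤ (g v : T') :=
      fun t v hv => Finset.inf'_le _ (hmem.2 hv)
    have hmono : ∀ {t s : T}, t ≤ s → f t ≤ f s := by
      intro t s h
      exact Finset.le_inf' _ _ fun v hv => hfle t v (h.trans (hmem.1 hv))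
    -- achieving pair
    have hpair : ∀ t : T, ¬ IsMax t → ∃ v w : {t : T // IsMax t},
        t ≤ (v : T) ∧ t ≤ (w : T) ∧ v ≠ w ∧ f t = (g v : T') ⊓ (g w : T') := by
      intro t ht
      obtain ⟨c1, c2, hc, hc1, hc2⟩ := hbranch t ht
      obtain ⟨u1', hu1, hm1⟩ := hleaf c1
      obtain ⟨u2', hu2, hm2⟩ := hleaf c2
      set u1 : {t : T // IsMax t} := ⟨u1', hm1⟩ with hu1def
      set u2 : {t : T // IsMax t} := ⟨u2', hm2⟩ with hu2def
      have htu1 : t ≤ (u1 : T) := hc1.lt.le.trans hu1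
      have htu2 : t ≤ (u2 : T) := hc2.lt.le.trans hu2
      have hune : u1 ≠ u2 := by
        intro h
        have : c2 ≤ (u1 : T) := by rw [h]; exact hu2
        exact hc (tree_covers_eq hlin hc1 hc2 hu1 this)
      obtain ⟨mv, hmvmem, hmvmin⟩ := (Finset.exists_minimal (s :=
        ((V t).image fun v => (g u1 : T') ⊓ (g v : T')))
        ((hVne t).image _)).imp fun _ h => And.intro h.1 fun x hx => h.not_lt (y := x) hx
      obtain ⟨v2, hv2mem, hv2eq⟩ := Finset.mem_image.1 hmvmem
      have hmle : mv ≤ (g u1 : T') := hv2eq ▸ inf_le_left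
      have hleast : ∀ v ∈ V t, mv ≤ (g u1 : T') ⊓ (g v : T') := by
        intro v hv
        rcases hlin' (g u1 : T') mv ((g u1 : T') ⊓ (g v : T')) hmle inf_le_left with h | h
        · exact h
        · rcases eq_or_lt_of_le h with h' | h'
          · exact h'.ge
          · exact absurd h' (hmvmin _ (Finset.mem_image_of_mem _ hv))
      have hft : f t = mv := by
        apply le_antisymm
        · rw [← hv2eq]
          exact le_inf (hfle t u1 htu1) (hfle t v2 (hmem.1 hv2mem))
        · exact Finset.le_inf' _ _ fun v hv => (hleast v hv).trans inf_le_right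
      by_cases hv2u1 : v2 = u1
      · exfalso
        have hmv : mv = (g u1 : T') := by rw [← hv2eq, hv2u1, inf_idem]
        have h1 : (g u1 : T') ≤ (g u2 : T') :=
          hmv ▸ ((hleast u2 (hmem.2 htu2)).trans inf_le_right)
        have : g u1 = g u2 := Subtype.ext (le_antisymm h1 ((g u1).2 h1))
        exact hune (g.injective this)
      · exact ⟨u1, v2, htu1, hmem.1 hv2mem, fun h => hv2u1 h.symm, hft.trans hv2eq.symm⟩
    have hleaff : ∀ v : {t : T // IsMax t}, f (v : T) = (g v : T') := by
      intro v
      apply le_antisymm (hfle _ v le_rfl)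
      refine Finset.le_inf' _ _ fun u hu => ?_
      have h1 : (v : T) ≤ u := hmem.1 hu
      have : u = v := Subtype.ext (le_antisymm (v.2 h1) h1)
      rw [this]
    -- label preservation
    have hlabel : ∀ t : T, ℓ' (f t) = ℓ t := by
      intro t
      by_cases ht : IsMax t
      · rw [hleaff ⟨t, ht⟩]
        rw [(hleaf2' _).2 (g ⟨t, ht⟩).2, (hleaf2 _).2 ht]
      · by_contra hne
        obtain ⟨c1, c2, hc, hc1, hc2⟩ := hbranch t ht
        obtain ⟨x1', hx1le, hx1m⟩ := hleaf c1
        obtain ⟨x2', hx2le, hx2m⟩ := hleaf c2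
        set x1 : {t : T // IsMax t} := ⟨x1', hx1m⟩
        set x2 : {t : T // IsMax t} := ⟨x2', hx2m⟩
        have htx1 : t ≤ (x1 : T) := hc1.lt.le.trans hx1le
        have htx2 : t ≤ (x2 : T) := hc2.lt.le.trans hx2le
        have hQx1 : c1 ≤ (x1 : T) := hx1le
        have hQx2 : ¬ c1 ≤ (x2 : T) := fun h =>
          hc (tree_covers_eq hlin hc1 hc2 h hx2le)
        obtain ⟨v1, v2, hv1, hv2, hvne, hft⟩ := hpair t ht
        have hftlt : f t < (g v1 : T') := by
          rw [hft]
          refine lt_of_le_of_ne inf_le_left fun h => ?_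
          have h1 : (g v1 : T') ≤ g v2 := h ▸ inf_le_right
          exact hvne (g.injective (Subtype.ext (le_antisymm h1 ((g v1).2 h1))))
        obtain ⟨c', hc', hc'le⟩ := exists_covby_le_fin hftlt
        have hPv1 : c' ≤ (g v1 : T') := hc'le
        have hPv2 : ¬ c' ≤ (g v2 : T') := by
          intro h
          have : c' ≤ f t := hft ▸ le_inf hc'le h
          exact hc'.lt.not_ge this
        -- cross lemmas
        have crossA : ∀ v w : {t : T // IsMax t}, t ≤ (v : T) → t ≤ (w : T) →
            c1 ≤ (v : T) → ¬ c1 ≤ (w : T) → ℓ ((v : T) ⊓ (w : T)) = ℓ t := by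
          intro v w _ hw hQv hQw
          rw [tree_cross_meet hlin hc1 hQv hw hQw]
        have crossB : ∀ v w : {t : T // IsMax t}, t ≤ (v : T) → t ≤ (w : T) →
            c' ≤ (g v : T') → ¬ c' ≤ (g w : T') → ℓ ((v : T) ⊓ (w : T)) = ℓ' (f t) := by
          intro v w hv hw hPv hPw
          have hvwne : v ≠ w := fun h => hPw (h ▸ hPv)
          have : (g v : T') ⊓ (g w : T') = f t :=
            tree_cross_meet hlin' hc' hPv (hfle t w hw) hPw
          rw [← key v w hvwne, this]
        -- combine
        have hsame : ∀ v w : {t : T // IsMax t}, t ≤ (v : T) → t ≤ (w : T) →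
            c1 ≤ (v : T) → ¬ c1 ≤ (w : T) →
            (c' ≤ (g v : T') ↔ c' ≤ (g w : T')) := by
          intro v w hv hw hQv hQw
          constructor
          · intro hPv
            by_contra hPw
            exact hne ((crossB v w hv hw hPv hPw) ▸ (crossA v w hv hw hQv hQw))
          · intro hPw
            by_contra hPv
            have h1 := crossB w v hw hv hPw hPv
            rw [inf_comm] at h1
            exact hne (h1 ▸ (crossA v w hv hw hQv hQw))
        have hPall : ∀ v : {t : T // IsMax t}, t ≤ (v : T) →
            (c' ≤ (g v : T') ↔ c' ≤ (g x1 : T')) := by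
          intro v hv
          by_cases hQv : c1 ≤ (v : T)
          · exact (hsame v x2 hv htx2 hQv hQx2).trans (hsame x1 x2 htx1 htx2 hQx1 hQx2).symm
          · exact (hsame x1 v htx1 hv hQx1 hQv).symm
        exact hPv2 ((hPall v2 hv2).2 ((hPall v1 hv1).1 hPv1))
    -- the diamond lemma
    have hdiamond : ∀ t : T, ¬ IsMax t → ∀ w : {t : T // IsMax t},
        ¬ t ≤ (w : T) → f t ≤ (g w : T') → ℓ (t ⊓ (w : T)) = ℓ t := by
      intro t ht w hw hfw
      obtain ⟨v1, v2, hv1, hv2, hvne, hft⟩ := hpair t ht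
      have hfv1 : f t ≤ (g v1 : T') := hft ▸ inf_le_left
      have hfv2 : f t ≤ (g v2 : T') := hft ▸ inf_le_right
      have hgoal : ∀ v : {t : T // IsMax t}, t ≤ (v : T) →
          (g v : T') ⊓ (g w : T') = f t → ℓ (t ⊓ (w : T)) = ℓ t := by
        intro v hv heq
        have hvwne : v ≠ w := fun h => hw (h ▸ hv)
        have h1 : ℓ' (f t) = ℓ ((v : T) ⊓ (w : T)) := heq ▸ key v w hvwne
        have h2 : (v : T) ⊓ (w : T) = t ⊓ (w : T) := tree_meet_eq_of_not_le hlin hv hw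
        rw [← h2, ← h1, hlabel t]
      rcases hlin' (g w : T') ((g v1 : T') ⊓ (g w : T')) ((g v2 : T') ⊓ (g w : T'))
        inf_le_right inf_le_right with h | h
      · refine hgoal v1 hv1 (le_antisymm ?_ (le_inf hfv1 hfw))
        rw [hft]
        exact le_inf inf_le_left (h.trans inf_le_left)
      · refine hgoal v2 hv2 (le_antisymm ?_ (le_inf hfv2 hfw))
        rw [hft]
        exact le_inf (h.trans inf_le_left) inf_le_left
    -- the star lemma
    have hstar : ∀ (t : T) (w : {t : T // IsMax t}), f t ≤ (g w : T') → t ≤ (w : T) := by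
      intro t w hfw
      by_cases ht : IsMax t
      · have h1 : (g ⟨t, ht⟩ : T') ≤ g w := by
          rw [← hleaff ⟨t, ht⟩]; exact hfw
        have h2 : g ⟨t, ht⟩ = g w := Subtype.ext (le_antisymm h1 ((g ⟨t, ht⟩).2 h1))
        have h3 : (⟨t, ht⟩ : {t : T // IsMax t}) = w := g.injective h2
        rw [← h3]
      by_contra hw
      have hm : t ⊓ (w : T) < t := by
        refine lt_of_le_of_ne inf_le_left fun h => hw (h ▸ inf_le_right)
      have hmlab : ℓ (t ⊓ (w : T)) = ℓ t := hdiamond t ht w hw hfw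
      obtain ⟨r, hr, hrt⟩ := exists_covby_le_fin hm
      have hmnm : ¬ IsMax (t ⊓ (w : T)) := hm.not_isMax
      have hml2 : ℓ (t ⊓ (w : T)) ≠ 2 := fun h => hmnm ((hleaf2 _).1 h)
      rcases eq_or_lt_of_le hrt with rfl | hrlt
      · -- r = t : t covers t ⊓ w, alternation contradicts hmlab
        have := halt _ _ hr hmnm ht
        omega
      · have hrnm : ¬ IsMax r := hrlt.not_isMax
        have hrw : ¬ r ≤ (w : T) := fun h => hr.lt.not_ge (le_inf hrt h)
        have h1 : ℓ (r ⊓ (w : T)) = ℓ r := hdiamond r hrnm w hrw ((hmono hrt).trans hfw)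
        have h2 : r ⊓ (w : T) = t ⊓ (w : T) := by
          apply le_antisymm
          · exact le_inf (inf_le_left.trans hrt) inf_le_right
          · exact le_inf hr.lt.le inf_le_right
        rw [h2, hmlab] at h1
        have := halt _ _ hr hmnm hrnm
        omega
    -- strict monotonicity
    have hltne : ∀ {s t : T}, s < t → f s ≠ f t := by
      intro s t hst heq
      obtain ⟨r, hr, hrt⟩ := exists_covby_le_fin hst
      have hsnm : ¬ IsMax s := hst.not_isMax
      have hs2 : ℓ s ≠ 2 := fun h => hsnm ((hleaf2 _).1 h)
      have hfr : f r = f s := by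
        apply le_antisymm
        · rw [heq]; exact hmono hrt
        · exact hmono hr.lt.le
      have hlr : ℓ r = ℓ s := by
        rw [← hlabel r, ← hlabel s, hfr]
      by_cases hrm : IsMax r
      · have := (hleaf2 _).2 hrm
        omega
      · have := halt _ _ hr hsnm hrm
        omega
    have hreflect : ∀ {t s : T}, f t ≤ f s → t ≤ s := by
      intro t s h
      obtain ⟨w', hw', hwm⟩ := hleaf s
      have h1 : f t ≤ (g ⟨w', hwm⟩ : T') := h.trans (hfle s ⟨w', hwm⟩ hw')
      have h2 : t ≤ w' := hstar t ⟨w', hwm⟩ h1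
      rcases hlin w' t s h2 hw' with h3 | h3
      · exact h3
      · rcases eq_or_lt_of_le h3 with h4 | h4
        · exact h4.ge
        · exact absurd (le_antisymm h (hmono h4.le)) (fun he => hltne h4 he.symm)
    refine ⟨OrderEmbedding.ofMapLEIff f (fun a b => ⟨fun h => hreflect h, fun h => hmono h⟩),
      fun t => hlabel t, fun v w hv hw => ?_⟩
    show ℓ' (f v ⊓ f w) = ℓ (v ⊓ w)
    by_cases hvw : v = w
    · subst hvw
      rw [inf_idem, inf_idem, hlabel]
    · rw [hleaff ⟨v, hv⟩, hleaff ⟨w, hw⟩]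
      exact key ⟨v, hv⟩ ⟨w, hw⟩ (fun h => hvw (congrArg Subtype.val h))
  · rintro ⟨f, hlab, hmeet⟩
    refine ⟨⟨⟨fun v => ⟨f v, ?_⟩, ?_⟩, ?_⟩⟩
    · exact (hleaf2' _).1 (by rw [hlab]; exact (hleaf2 _).2 v.2)
    · intro a b h
      exact Subtype.ext (f.injective (congrArg Subtype.val h))
    · intro a b
      constructor
      · rintro ⟨hne, h⟩
        refine ⟨fun he => hne (congrArg _ he), ?_⟩
        rw [← hmeet (a : T) (b : T) a.2 b.2]
        exact h
      · rintro ⟨hne, h⟩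
        refine ⟨fun he => hne (Subtype.ext (f.injective (congrArg Subtype.val he))), ?_⟩
        show ℓ' (f (a : T) ⊓ f (b : T)) = 1
        rw [hmeet (a : T) (b : T) a.2 b.2]
        exact h
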